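/- Let λ ≥ 4 be an even integer and let X = Σ_{i=1}^n X_i, where X_1,…,X_n are λ-wise independent random variables each taking values in [0,M]. Let μ = E[X]. Then for every a > 0, Pr[|X − μ| > a] ≤ 8·((μλM + λ²M²)/a²)^{λ/2}. -/

import Mathlib

open MeasureTheory ProbabilityTheory Finset


open Finset

lemma desc_pairs (lam k : ℕ) : lam.descFactorial (2*k) = ∏ j ∈ range k, ((lam - 2*j) * (lam - (2*j+1))) := by
  induction k with
  | zero => simp
  | succ k ih =>
      rw [prod_range_succ, ← ih, show 2*(k+1) = (2*k+1)+1 by ring, Nat.descFactorial_succ,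
        Nat.descFactorial_succ]
      ring_nf

lemma exp_half_le_two : Real.exp (1/2 : ℝ) ≤ 2 := by
  nlinarith [Real.exp_one_lt_d9, Real.exp_nonneg (1/2:ℝ), Real.exp_pos (1/2:ℝ), Real.exp_add (1/2:ℝ) (1/2:ℝ)]

lemma count_bound (h k : ℕ) (hk1 : 1 ≤ k) (hkh : k ≤ h) :
    ((2*h).descFactorial (2*k) * k^(2*h-2*k) : ℝ) ≤
      ((k.factorial * h.choose k : ℕ) : ℝ) * ((2*h:ℕ):ℝ)^(2*h-k) := by
  set lam := 2*h with hlam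
  set m := lam - 2*k with hm
  have hk2 : 2*k ≤ lam := by omega
  have hm' : lam = 2*k + m := by omega
  have hsplit : lam.descFactorial (2*k) = h.descFactorial k * ∏ j ∈ range k, (2*(lam - (2*j+1))) := by
    rw [desc_pairs, Nat.descFactorial_eq_prod_range, ← prod_mul_distrib]
    refine prod_congr rfl fun j hj => ?_
    have hj' : j < k := mem_range.mp hj
    have : lam - 2*j = 2*(h-j) := by omega
    rw [this]; ring_nf
  have hdesc_choose : h.descFactorial k = k.factorial * h.choose k :=
    Nat.descFactorial_eq_factorial_mul_choose h k
  set Q : ℝ := ∏ j ∈ range k, ((2*(lam - (2*j+1)) : ℕ) : ℝ) with hQdef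
  have hQnn : 0 ≤ Q := prod_nonneg fun j _ => Nat.cast_nonneg _
  have hQsq : Q^2 ≤ (((lam + m : ℕ):ℝ)^k)^2 := by
    have hrefl : Q = ∏ j ∈ range k, ((2*(lam - (2*(k-1-j)+1)) : ℕ) : ℝ) := by
      rw [hQdef, ← prod_range_reflect]
    calc Q^2 = ∏ j ∈ range k, (((2*(lam - (2*j+1)) : ℕ) : ℝ) * ((2*(lam - (2*(k-1-j)+1)) : ℕ) : ℝ)) := by
            rw [prod_mul_distrib, ← hrefl, hQdef, sq]
      _ ≤ ∏ j ∈ range k, (((lam + m : ℕ):ℝ))^2 := by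
            refine prod_le_prod (fun j _ => mul_nonneg (Nat.cast_nonneg _) (Nat.cast_nonneg _))
              (fun j hj => ?_)
            have hj' : j < k := mem_range.mp hj
            have h1 : (2*(lam - (2*j+1)) : ℕ) + (2*(lam - (2*(k-1-j)+1)) : ℕ) = 2*(lam + m) := by omega
            have h1' : ((2*(lam - (2*j+1)) : ℕ) : ℝ) + ((2*(lam - (2*(k-1-j)+1)) : ℕ) : ℝ) = 2*((lam+m:ℕ):ℝ) := by
              rw [← Nat.cast_add, h1]; push_cast; ring
            nlinarith [Nat.cast_nonneg (α := ℝ) (2*(lam - (2*j+1))), Nat.cast_nonneg (α := ℝ) (2*(lam - (2*(k-1-j)+1))),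
              sq_nonneg (((2*(lam - (2*j+1)) : ℕ) : ℝ) - ((2*(lam - (2*(k-1-j)+1)) : ℕ) : ℝ))]
      _ = (((lam + m : ℕ):ℝ)^k)^2 := by rw [prod_const, card_range, ← pow_mul, ← pow_mul, Nat.mul_comm]
  have hQle : Q ≤ ((lam + m : ℕ):ℝ)^k :=
    le_of_pow_le_pow_left₀ two_ne_zero (pow_nonneg (Nat.cast_nonneg _) _) hQsq
  have hlpos : (0:ℝ) < ((lam:ℕ):ℝ) := by
    have h2lam : (2:ℕ) ≤ lam := by omega
    exact_mod_cast Nat.lt_of_lt_of_le (by norm_num) h2lam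
  have hexp : ((lam + m : ℕ):ℝ)^k ≤ ((lam:ℕ):ℝ)^k * 2^m := by
    have h1 : ((lam + m : ℕ):ℝ) = ((lam:ℕ):ℝ) * (1 + (m:ℝ)/((lam:ℕ):ℝ)) := by
      field_simp
      exact Nat.cast_add _ _
    have h2 : (1 + (m:ℝ)/((lam:ℕ):ℝ)) ≤ Real.exp ((m:ℝ)/((lam:ℕ):ℝ)) := by
      have := Real.add_one_le_exp ((m:ℝ)/((lam:ℕ):ℝ)); linarith
    have h3 : ((lam + m : ℕ):ℝ)^k ≤ ((lam:ℕ):ℝ)^k * Real.exp ((m:ℝ)/((lam:ℕ):ℝ))^k := by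
      rw [h1, mul_pow]
      refine mul_le_mul_of_nonneg_left (pow_le_pow_left₀ (by positivity) h2 k) (by positivity)
    refine h3.trans (mul_le_mul_of_nonneg_left ?_ (by positivity))
    rw [← Real.exp_nat_mul]
    have h4 : (k:ℝ) * ((m:ℝ)/((lam:ℕ):ℝ)) ≤ (m:ℝ) * (1/2) := by
      rw [mul_comm, div_mul_eq_mul_div, div_le_iff₀ hlpos]
      have hkl : 2*(k:ℝ) ≤ ((lam:ℕ):ℝ) := by exact_mod_cast hk2
      have hmnn : (0:ℝ) ≤ (m:ℝ) := Nat.cast_nonneg _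
      nlinarith
    calc Real.exp ((k:ℝ) * ((m:ℝ)/((lam:ℕ):ℝ))) ≤ Real.exp ((m:ℝ) * (1/2)) := Real.exp_le_exp.mpr h4
      _ = Real.exp (1/2)^m := Real.exp_nat_mul _ m
      _ ≤ 2^m := pow_le_pow_left₀ (Real.exp_nonneg _) exp_half_le_two m
  have hkm : ((k:ℕ):ℝ)^m * 2^m ≤ ((lam:ℕ):ℝ)^m := by
    rw [← mul_pow]
    refine pow_le_pow_left₀ (by positivity) ?_ m
    exact_mod_cast (by omega : k*2 ≤ lam)
  rw [show lam - k = k + m by omega, hsplit]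
  rw [Nat.cast_mul, Nat.cast_prod]
  have key : Q * (k:ℝ)^m ≤ ((lam:ℕ):ℝ)^(k+m) := by
    calc Q * (k:ℝ)^m ≤ (((lam:ℕ):ℝ)^k * 2^m) * (k:ℝ)^m :=
          mul_le_mul_of_nonneg_right (hQle.trans hexp) (by positivity)
      _ = ((lam:ℕ):ℝ)^k * ((k:ℝ)^m * 2^m) := by ring
      _ ≤ ((lam:ℕ):ℝ)^k * ((lam:ℕ):ℝ)^m := mul_le_mul_of_nonneg_left hkm (by positivity)
      _ = ((lam:ℕ):ℝ)^(k+m) := (pow_add _ _ _).symm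
  rw [hdesc_choose]
  calc ((k.factorial * h.choose k : ℕ):ℝ) * Q * (k:ℝ)^m
        = ((k.factorial * h.choose k : ℕ):ℝ) * (Q * (k:ℝ)^m) := by ring
    _ ≤ ((k.factorial * h.choose k : ℕ):ℝ) * ((lam:ℕ):ℝ)^(k+m) :=
        mul_le_mul_of_nonneg_left key (by positivity)
section Helpers
variable {Ω : Type*} [MeasurableSpace Ω] {μ : Measure Ω} [IsProbabilityMeasure μ]

/-- bounded measurable functions are integrable on a probability space -/
lemma integrable_of_bdd {f : Ω → ℝ} {C : ℝ} (hf : Measurable f) (hC : ∀ ω, |f ω| ≤ C) :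
    Integrable f μ := by
  refine Integrable.mono' (integrable_const C) hf.aestronglyMeasurable ?_
  exact Filter.Eventually.of_forall fun ω => by simpa [Real.norm_eq_abs] using hC ω

/-- sum comparison via an injection with proofs available -/
lemma sum_le_sum_inj {α β : Type*} [DecidableEq β] (s : Finset α) (t : Finset β)
    (w : α → ℝ) (v : β → ℝ) (Φ : (x : α) → x ∈ s → β)
    (hmem : ∀ x hx, Φ x hx ∈ t)
    (hinj : ∀ x hx y hy, Φ x hx = Φ y hy → x = y)
    (hval : ∀ x hx, w x = v (Φ x hx))
    (hnn : ∀ y ∈ t, 0 ≤ v y) :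
    ∑ x ∈ s, w x ≤ ∑ y ∈ t, v y := by
  have h1 : ∑ x ∈ s, w x = ∑ x ∈ s.attach, v (Φ x.1 x.2) := by
    rw [← Finset.sum_attach s w]
    exact Finset.sum_congr rfl fun x _ => hval x.1 x.2
  have hinj' : Set.InjOn (fun x : {x // x ∈ s} => Φ x.1 x.2) s.attach := by
    intro x _ y _ hxy
    exact Subtype.ext (hinj x.1 x.2 y.1 y.2 hxy)
  rw [h1, ← Finset.sum_image hinj']
  refine Finset.sum_le_sum_of_subset_of_nonneg ?_ (fun y hy _ => hnn y hy)
  intro y hy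
  obtain ⟨x, _, rfl⟩ := Finset.mem_image.mp hy
  exact hmem x.1 x.2

/-- integral of product of independent, bounded random variables -/
lemma integral_prod_of_indep {ι : Type*} [DecidableEq ι] {f : ι → Ω → ℝ} {C : ι → ℝ}
    (hind : iIndepFun f μ) (hmeas : ∀ i, Measurable (f i))
    (hbd : ∀ i ω, |f i ω| ≤ C i) (s : Finset ι) :
    ∫ ω, ∏ i ∈ s, f i ω ∂μ = ∏ i ∈ s, ∫ ω, f i ω ∂μ := by
  classical
  have hint : ∀ u : Finset ι, Integrable (fun ω => ∏ i ∈ u, f i ω) μ := by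
    intro u
    refine integrable_of_bdd (by exact Finset.measurable_prod u fun i _ => hmeas i) (C := ∏ i ∈ u, C i) ?_
    intro ω
    rw [abs_prod]
    exact Finset.prod_le_prod (fun i _ => abs_nonneg _) (fun i _ => hbd i ω)
  induction s using Finset.induction_on with
  | empty => simp
  | @insert a s ha ih =>
      have hfe : (∏ j ∈ s, f j) = fun ω => ∏ j ∈ s, f j ω := by funext ω; simp
      have hiid : IndepFun (∏ j ∈ s, f j) (f a) μ :=
        hind.indepFun_finsetProd_of_notMem hmeas ha
      have key := hiid.integral_mul_eq_mul_integral (by rw [hfe]; exact (hint s).aestronglyMeasurable)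
        (integrable_of_bdd (hmeas a) (hbd a)).aestronglyMeasurable
      calc ∫ ω, ∏ i ∈ insert a s, f i ω ∂μ
          = ∫ ω, ((∏ j ∈ s, f j) * f a) ω ∂μ := by
            refine integral_congr_ae (Filter.Eventually.of_forall fun ω => ?_)
            simp [Finset.prod_insert ha, mul_comm]
        _ = (∫ ω, (∏ j ∈ s, f j) ω ∂μ) * ∫ ω, f a ω ∂μ := key
        _ = ∏ i ∈ insert a s, ∫ ω, f i ω ∂μ := by
            rw [hfe, ih, Finset.prod_insert ha, mul_comm]

end Helpers

namespace BR

lemma oEF_congr {α : Type*} [LinearOrder α] {k : ℕ} {S T : Finset α} (h : S = T)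
    (hS : S.card = k) (hT : T.card = k) : S.orderEmbOfFin hS = T.orderEmbOfFin hT := by
  subst h; rfl

variable {lam k n : ℕ}

/-- pattern of a function, relabeling its image by `Fin k` in increasing order -/
def pat (f : Fin lam → Fin n) (hfk : (image f univ).card = k) : Fin lam → Fin k := fun t =>
  ((image f univ).orderIsoOfFin hfk).symm ⟨f t, mem_image_of_mem f (mem_univ t)⟩

lemma pat_spec (f : Fin lam → Fin n) (hfk : (image f univ).card = k) (t : Fin lam) :
    ((image f univ).orderEmbOfFin hfk) (pat f hfk t) = f t := by
  rw [pat, ← Finset.coe_orderIsoOfFin_apply, OrderIso.apply_symm_apply]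

def fib (f : Fin lam → Fin n) (hfk : (image f univ).card = k) (j : Fin k) : Finset (Fin lam) :=
  univ.filter (fun t => pat f hfk t = j)

lemma mem_fib_iff (f : Fin lam → Fin n) (hfk : (image f univ).card = k) (j : Fin k) (t : Fin lam) :
    t ∈ fib f hfk j ↔ f t = (image f univ).orderEmbOfFin hfk j := by
  simp only [fib, mem_filter, mem_univ, true_and]
  constructor
  · rintro rfl; exact (pat_spec f hfk t).symm
  · intro h
    have : (⟨f t, mem_image_of_mem f (mem_univ t)⟩ : ((image f univ) : Type _)) =
        (image f univ).orderIsoOfFin hfk j := by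
      apply Subtype.ext; rw [Finset.coe_orderIsoOfFin_apply]; exact h
    rw [pat, this, OrderIso.symm_apply_apply]

lemma fib_card (f : Fin lam → Fin n) (hfk : (image f univ).card = k)
    (hf2 : ∀ i ∈ image f univ, 2 ≤ #(univ.filter (fun t => f t = i))) (j : Fin k) :
    2 ≤ (fib f hfk j).card := by
  have h1 : fib f hfk j = univ.filter (fun t => f t = (image f univ).orderEmbOfFin hfk j) := by
    ext t; rw [mem_fib_iff]; simp
  rw [h1]
  exact hf2 _ (Finset.orderEmbOfFin_mem _ hfk j)

variable (f : Fin lam → Fin n) (hfk : (image f univ).card = k)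
  (hf2 : ∀ i ∈ image f univ, 2 ≤ #(univ.filter (fun t => f t = i)))

def aa (j : Fin k) : Fin lam :=
  (fib f hfk j).min' (card_pos.mp (by have := fib_card f hfk hf2 j; omega))

lemma aa_mem (j : Fin k) : aa f hfk hf2 j ∈ fib f hfk j := Finset.min'_mem _ _

def bb (j : Fin k) : Fin lam :=
  ((fib f hfk j).erase (aa f hfk hf2 j)).min' (card_pos.mp (by
    have h2 := fib_card f hfk hf2 j
    rw [Finset.card_erase_of_mem (aa_mem f hfk hf2 j)]; omega))

lemma bb_mem (j : Fin k) : bb f hfk hf2 j ∈ fib f hfk j :=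
  Finset.mem_of_mem_erase (Finset.min'_mem _ _)

lemma bb_ne (j : Fin k) : bb f hfk hf2 j ≠ aa f hfk hf2 j :=
  Finset.ne_of_mem_erase (Finset.min'_mem _ _)

def enc2 : Fin (2*k) → Fin lam := fun u =>
  if u.1 % 2 = 0 then aa f hfk hf2 ⟨u.1/2, by omega⟩ else bb f hfk hf2 ⟨u.1/2, by omega⟩

lemma enc2_mem_fib (u : Fin (2*k)) : enc2 f hfk hf2 u ∈ fib f hfk ⟨u.1/2, by omega⟩ := by
  rw [enc2]
  split
  · exact aa_mem f hfk hf2 _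
  · exact bb_mem f hfk hf2 _

lemma pat_enc2 (u : Fin (2*k)) : pat f hfk (enc2 f hfk hf2 u) = ⟨u.1/2, by omega⟩ := by
  have := enc2_mem_fib f hfk hf2 u
  rw [fib, mem_filter] at this
  exact this.2

lemma enc2_inj : Function.Injective (enc2 f hfk hf2) := by
  intro u u' h
  have h2 : (⟨u.1/2, by omega⟩ : Fin k) = ⟨u'.1/2, by omega⟩ := by
    rw [← pat_enc2 f hfk hf2 u, ← pat_enc2 f hfk hf2 u', h]
  have hdiv : u.1/2 = u'.1/2 := congrArg Fin.val h2
  by_contra hne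
  have hval : u.1 ≠ u'.1 := fun hv => hne (Fin.ext hv)
  have hpar : (u.1 % 2 = 0 ∧ u'.1 % 2 = 1) ∨ (u.1 % 2 = 1 ∧ u'.1 % 2 = 0) := by omega
  rcases hpar with ⟨h0, h1⟩ | ⟨h0, h1⟩
  · rw [enc2, if_pos h0] at h
    rw [enc2, if_neg (by omega)] at h
    refine bb_ne f hfk hf2 ⟨u'.1/2, by omega⟩ ?_
    rw [← h]
    exact congrArg _ h2
  · rw [enc2, if_neg (by omega)] at h
    rw [enc2, if_pos h1] at h
    refine bb_ne f hfk hf2 ⟨u.1/2, by omega⟩ ?_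
    rw [h]
    exact congrArg _ h2.symm

def pairsSet : Finset (Fin lam) := Finset.map ⟨enc2 f hfk hf2, enc2_inj f hfk hf2⟩ univ

lemma pairsSet_card : (pairsSet f hfk hf2).card = 2*k := by
  rw [pairsSet, Finset.card_map, card_univ, Fintype.card_fin]

lemma compl_card : ((univ : Finset (Fin lam)) \ pairsSet f hfk hf2).card = lam - 2*k := by
  rw [Finset.card_sdiff_of_subset (subset_univ _), pairsSet_card, card_univ, Fintype.card_fin]

def encg : Fin (lam - 2*k) → Fin k := fun u =>
  pat f hfk ((((univ : Finset (Fin lam)) \ pairsSet f hfk hf2)).orderEmbOfFin (compl_card f hfk hf2) u)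

def encode : (Fin (2*k) ↪ Fin lam) × (Fin (lam - 2*k) → Fin k) × Finset (Fin n) :=
  (⟨enc2 f hfk hf2, enc2_inj f hfk hf2⟩, encg f hfk hf2, image f univ)

end BR

namespace BR2
open BR

lemma encode_inj {lam k n : ℕ} (f1 f2 : Fin lam → Fin n)
    (hfk1 : (image f1 univ).card = k)
    (hf21 : ∀ i ∈ image f1 univ, 2 ≤ #(univ.filter (fun t => f1 t = i)))
    (hfk2 : (image f2 univ).card = k)
    (hf22 : ∀ i ∈ image f2 univ, 2 ≤ #(univ.filter (fun t => f2 t = i)))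
    (h : encode f1 hfk1 hf21 = encode f2 hfk2 hf22) : f1 = f2 := by
  have h1 : (⟨enc2 f1 hfk1 hf21, enc2_inj f1 hfk1 hf21⟩ : Fin (2*k) ↪ Fin lam) =
      ⟨enc2 f2 hfk2 hf22, enc2_inj f2 hfk2 hf22⟩ := congrArg Prod.fst h
  have hg : encg f1 hfk1 hf21 = encg f2 hfk2 hf22 := congrArg (fun x => x.2.1) h
  have hS : image f1 univ = image f2 univ := congrArg (fun x => x.2.2) h
  have hE : enc2 f1 hfk1 hf21 = enc2 f2 hfk2 hf22 := congrArg (fun e : Fin (2*k) ↪ Fin lam => (e : Fin (2*k) → Fin lam)) h1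
  have hP : pairsSet f1 hfk1 hf21 = pairsSet f2 hfk2 hf22 := by
    rw [pairsSet, pairsSet]; congr 1
  have hoEF_S : (image f1 univ).orderEmbOfFin hfk1 = (image f2 univ).orderEmbOfFin hfk2 :=
    oEF_congr hS hfk1 hfk2
  have hoEF_C : ((univ : Finset (Fin lam)) \ pairsSet f1 hfk1 hf21).orderEmbOfFin (compl_card f1 hfk1 hf21) =
      ((univ : Finset (Fin lam)) \ pairsSet f2 hfk2 hf22).orderEmbOfFin (compl_card f2 hfk2 hf22) :=
    oEF_congr (by rw [hP]) _ _
  have hpat : pat f1 hfk1 = pat f2 hfk2 := by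
    funext t
    by_cases ht : t ∈ pairsSet f1 hfk1 hf21
    · obtain ⟨u, _, hu⟩ := Finset.mem_map.mp ht
      have hu1 : enc2 f1 hfk1 hf21 u = t := hu
      have hu2 : enc2 f2 hfk2 hf22 u = t := by rw [← hE]; exact hu
      have e1 : pat f1 hfk1 t = ⟨u.1/2, by omega⟩ := by
        rw [← hu1]; exact pat_enc2 f1 hfk1 hf21 u
      have e2 : pat f2 hfk2 t = ⟨u.1/2, by omega⟩ := by
        rw [← hu2]; exact pat_enc2 f2 hfk2 hf22 u
      rw [e1, e2]
    · have htc : t ∈ ((univ : Finset (Fin lam)) \ pairsSet f1 hfk1 hf21) :=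
        mem_sdiff.mpr ⟨mem_univ t, ht⟩
      have htr : t ∈ Set.range (((univ : Finset (Fin lam)) \ pairsSet f1 hfk1 hf21).orderEmbOfFin (compl_card f1 hfk1 hf21)) := by
        rw [Finset.range_orderEmbOfFin]
        exact_mod_cast htc
      obtain ⟨u, hu⟩ := htr
      have e1 : pat f1 hfk1 t = encg f1 hfk1 hf21 u := by rw [encg, hu]
      have e2 : pat f2 hfk2 t = encg f2 hfk2 hf22 u := by rw [encg, ← hoEF_C, hu]
      rw [e1, e2, hg]
  funext t
  have hps := pat_spec f1 hfk1 t
  rw [← hps, hoEF_S, hpat, pat_spec]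

end BR2

section Counting
open BR BR2

/-- elementary symmetric bound : k! * e_k ≤ (∑ m)^k -/
lemma esymm_bound (n k : ℕ) (m : Fin n → ℝ) (hm : ∀ i, 0 ≤ m i) :
    (k.factorial : ℝ) * (∑ S ∈ powersetCard k (univ : Finset (Fin n)), ∏ i ∈ S, m i) ≤
      (∑ i, m i)^k := by
  classical
  rw [Fintype.sum_pow]
  have hrange : ∀ (r : Finset (Fin n) × Equiv.Perm (Fin k))
      (hr : r ∈ (powersetCard k (univ : Finset (Fin n))) ×ˢ (univ : Finset (Equiv.Perm (Fin k)))),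
      r.1 = image (fun j => r.1.orderEmbOfFin (mem_powersetCard.mp (mem_product.mp hr).1).2 (r.2 j)) univ := by
    intro r hr
    apply Finset.coe_injective
    rw [coe_image, coe_univ, Set.image_univ]
    have h0 : Set.range (fun j => r.1.orderEmbOfFin (mem_powersetCard.mp (mem_product.mp hr).1).2 (r.2 j)) =
        Set.range (r.1.orderEmbOfFin (mem_powersetCard.mp (mem_product.mp hr).1).2) :=
      r.2.surjective.range_comp _
    rw [h0, Finset.range_orderEmbOfFin]
  have key : ∑ p ∈ (powersetCard k (univ : Finset (Fin n))) ×ˢ (univ : Finset (Equiv.Perm (Fin k))),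
      (∏ i ∈ p.1, m i) ≤ ∑ g : Fin k → Fin n, ∏ j, m (g j) := by
    refine sum_le_sum_inj _ _ _ _
      (fun p hp => fun j => p.1.orderEmbOfFin (mem_powersetCard.mp (mem_product.mp hp).1).2 (p.2 j))
      (fun p hp => mem_univ _) ?_ ?_ ?_
    · -- injectivity
      intro p hp q hq hpq
      have hS : p.1 = q.1 := by rw [hrange p hp, hrange q hq, hpq]
      have hoEF := oEF_congr hS (mem_powersetCard.mp (mem_product.mp hp).1).2
        (mem_powersetCard.mp (mem_product.mp hq).1).2
      have hperm : p.2 = q.2 := by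
        ext j
        have h5 := congrFun hpq j
        rw [hoEF] at h5
        exact congrArg Fin.val ((q.1.orderEmbOfFin (mem_powersetCard.mp (mem_product.mp hq).1).2).injective h5)
      exact Prod.ext hS hperm
    · -- value equality
      intro p hp
      have hcard := (mem_powersetCard.mp (mem_product.mp hp).1).2
      have h1 : ∏ j, m (p.1.orderEmbOfFin hcard (p.2 j)) = ∏ j, m (p.1.orderEmbOfFin hcard j) :=
        Equiv.prod_comp p.2 (fun j => m (p.1.orderEmbOfFin hcard j))
      have himg : image (⇑(p.1.orderEmbOfFin hcard)) univ = p.1 := by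
        apply Finset.coe_injective
        rw [coe_image, coe_univ, Set.image_univ, Finset.range_orderEmbOfFin]
      calc ∏ i ∈ p.1, m i = ∏ i ∈ image (⇑(p.1.orderEmbOfFin hcard)) univ, m i := by rw [himg]
        _ = ∏ j, m (p.1.orderEmbOfFin hcard j) :=
            Finset.prod_image (fun x _ y _ hxy => (p.1.orderEmbOfFin hcard).injective hxy)
        _ = ∏ j, m (p.1.orderEmbOfFin hcard (p.2 j)) := h1.symm
    · intro g _
      exact Finset.prod_nonneg fun j _ => hm _
  refine le_trans (le_of_eq ?_) key
  rw [Finset.sum_product_right]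
  simp only [Finset.sum_const, card_univ, Fintype.card_perm, Fintype.card_fin, nsmul_eq_mul]
end Counting

section MainCount
open BR BR2

lemma main_count (lam k n : ℕ) (m : Fin n → ℝ) (hm : ∀ i, 0 ≤ m i) :
    ∑ f ∈ (univ : Finset (Fin lam → Fin n)).filter
        (fun f => (∀ i ∈ image f univ, 2 ≤ #(univ.filter (fun t => f t = i))) ∧ (image f univ).card = k),
      ∏ i ∈ image f univ, m i
    ≤ ((lam.descFactorial (2*k) * k^(lam-2*k) : ℕ) : ℝ) *
        ∑ S ∈ powersetCard k (univ : Finset (Fin n)), ∏ i ∈ S, m i := by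
  classical
  have key := sum_le_sum_inj
    ((univ : Finset (Fin lam → Fin n)).filter
        (fun f => (∀ i ∈ image f univ, 2 ≤ #(univ.filter (fun t => f t = i))) ∧ (image f univ).card = k))
    ((univ : Finset ((Fin (2*k) ↪ Fin lam) × (Fin (lam - 2*k) → Fin k))) ×ˢ
        (powersetCard k (univ : Finset (Fin n))))
    (fun f => ∏ i ∈ image f univ, m i)
    (fun y => ∏ i ∈ y.2, m i)
    (fun f hf => (((encode f (mem_filter.mp hf).2.2 (mem_filter.mp hf).2.1).1,
        (encode f (mem_filter.mp hf).2.2 (mem_filter.mp hf).2.1).2.1),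
        (encode f (mem_filter.mp hf).2.2 (mem_filter.mp hf).2.1).2.2))
    (fun f hf => mem_product.mpr ⟨mem_univ _,
        mem_powersetCard_univ.mpr (mem_filter.mp hf).2.2⟩)
    ?_ (fun f hf => rfl)
    (fun y _ => Finset.prod_nonneg fun i _ => hm i)
  · refine key.trans (le_of_eq ?_)
    rw [Finset.sum_product]
    simp only [Finset.sum_const, card_univ, nsmul_eq_mul]
    rw [Fintype.card_prod, Fintype.card_embedding_eq, Fintype.card_fun]
    simp [Fintype.card_fin]
  · intro f hf g hg hfg
    have h1 : encode f (mem_filter.mp hf).2.2 (mem_filter.mp hf).2.1 =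
        encode g (mem_filter.mp hg).2.2 (mem_filter.mp hg).2.1 := by
      have ha := congrArg (fun y => y.1.1) hfg
      have hb := congrArg (fun y => y.1.2) hfg
      have hc := congrArg (fun y => y.2) hfg
      dsimp only at ha hb hc
      exact Prod.ext ha (Prod.ext hb hc)
    exact encode_inj f g _ _ _ _ h1
end MainCount

lemma nonempty_of_prob {Ω : Type*} [MeasurableSpace Ω] (μ : Measure Ω) [IsProbabilityMeasure μ] :
    Nonempty Ω := by
  by_contra h
  rw [not_nonempty_iff] at h
  have h2 := measure_univ (μ := μ)
  rw [Set.univ_eq_empty_iff.mpr h] at h2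
  simp at h2

section Factor
variable {Ω : Type*} [MeasurableSpace Ω] (μ : Measure Ω) [IsProbabilityMeasure μ]

variable {X : Ω → ℝ} {M : ℝ} (hX : Measurable X) (hb : ∀ ω, X ω ∈ Set.Icc 0 M)

include hX hb

lemma integral_X_mem : (∫ ω, X ω ∂μ) ∈ Set.Icc 0 M := by
  have : Nonempty Ω := nonempty_of_prob μ
  have hM0 : 0 ≤ M := (hb (Classical.arbitrary Ω)).1.trans (hb (Classical.arbitrary Ω)).2
  have hint : Integrable X μ := integrable_of_bdd hX (C := M)
    (fun ω => abs_le.mpr ⟨by linarith [(hb ω).1], (hb ω).2⟩)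
  constructor
  · exact integral_nonneg fun ω => (hb ω).1
  · calc ∫ ω, X ω ∂μ ≤ ∫ _, M ∂μ := integral_mono hint (integrable_const M) fun ω => (hb ω).2
      _ = M := by simp

lemma factor_bound {c : ℕ} (hc : 2 ≤ c) :
    |∫ ω, (X ω - ∫ ω', X ω' ∂μ)^c ∂μ| ≤ M^(c-1) * ∫ ω, X ω ∂μ := by
  have : Nonempty Ω := nonempty_of_prob μ
  set mx := ∫ ω, X ω ∂μ with hmx
  have hmem := integral_X_mem μ hX hb
  have hM0 : 0 ≤ M := (hb (Classical.arbitrary Ω)).1.trans (hb (Classical.arbitrary Ω)).2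
  have hYabs : ∀ ω, |X ω - mx| ≤ M := by
    intro ω
    rw [abs_le]
    constructor
    · linarith [(hb ω).1, hmem.2]
    · linarith [(hb ω).2, hmem.1]
  have hXint : Integrable X μ := integrable_of_bdd hX (C := M)
    (fun ω => abs_le.mpr ⟨by linarith [(hb ω).1], (hb ω).2⟩)
  have hYmeas : Measurable (fun ω => X ω - mx) := hX.sub measurable_const
  have hYc_int : Integrable (fun ω => (X ω - mx)^c) μ :=
    integrable_of_bdd (hYmeas.pow_const c) (C := M^c) (fun ω => by
      rw [abs_pow]
      exact pow_le_pow_left₀ (abs_nonneg _) (hYabs ω) c)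
  have hY2_int : Integrable (fun ω => (X ω - mx)^2) μ :=
    integrable_of_bdd (hYmeas.pow_const 2) (C := M^2) (fun ω => by
      rw [abs_pow]
      exact pow_le_pow_left₀ (abs_nonneg _) (hYabs ω) 2)
  have hXsq_int : Integrable (fun ω => X ω * X ω) μ :=
    integrable_of_bdd (hX.mul hX) (C := M*M) (fun ω => by
      rw [abs_mul]
      exact mul_le_mul (hYabs ω |>.trans (le_refl M) |> fun _ => (abs_le.mpr ⟨by linarith [(hb ω).1], (hb ω).2⟩).trans (le_refl M)) ((abs_le.mpr ⟨by linarith [(hb ω).1], (hb ω).2⟩)) (abs_nonneg _) hM0)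
  -- ∫ Y² ≤ M * mx
  have hY2 : ∫ ω, (X ω - mx)^2 ∂μ ≤ M * mx := by
    have hexp : ∫ ω, (X ω - mx)^2 ∂μ = (∫ ω, X ω * X ω ∂μ) - mx^2 := by
      have : ∀ ω, (X ω - mx)^2 = X ω * X ω - 2*mx*(X ω) + mx^2 := fun ω => by ring
      rw [integral_congr_ae (Filter.Eventually.of_forall fun ω => this ω)]
      rw [integral_add (by exact (hXsq_int.sub ((hXint.const_mul (2*mx))))) (integrable_const _)]
      rw [integral_sub hXsq_int (hXint.const_mul (2*mx))]
      rw [integral_const_mul, integral_const]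
      simp [hmx]
      ring
    rw [hexp]
    have hXsq : ∫ ω, X ω * X ω ∂μ ≤ M * mx := by
      have hpt : ∀ ω, X ω * X ω ≤ M * X ω := fun ω =>
        mul_le_mul_of_nonneg_right (hb ω).2 (hb ω).1
      calc ∫ ω, X ω * X ω ∂μ ≤ ∫ ω, M * X ω ∂μ :=
            integral_mono hXsq_int (hXint.const_mul M) hpt
        _ = M * mx := by rw [integral_const_mul]
    nlinarith [sq_nonneg mx]
  calc |∫ ω, (X ω - mx)^c ∂μ| ≤ ∫ ω, |(X ω - mx)^c| ∂μ := by
        simpa [Real.norm_eq_abs] using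
          norm_integral_le_integral_norm (μ := μ) (f := fun ω => (X ω - mx)^c)
    _ ≤ ∫ ω, M^(c-2) * (X ω - mx)^2 ∂μ := by
        refine integral_mono hYc_int.abs (hY2_int.const_mul _) fun ω => ?_
        rw [abs_pow]
        calc |X ω - mx|^c = |X ω - mx|^(c-2) * |X ω - mx|^2 := by
              rw [← pow_add]; congr 1; omega
          _ ≤ M^(c-2) * |X ω - mx|^2 :=
              mul_le_mul_of_nonneg_right (pow_le_pow_left₀ (abs_nonneg _) (hYabs ω) _)
                (by positivity)
          _ = M^(c-2) * (X ω - mx)^2 := by rw [sq_abs]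
    _ = M^(c-2) * ∫ ω, (X ω - mx)^2 ∂μ := integral_const_mul _ _
    _ ≤ M^(c-2) * (M * mx) := mul_le_mul_of_nonneg_left hY2 (by positivity)
    _ = M^(c-1) * mx := by
        rw [← mul_assoc, ← pow_succ]
        congr 2
        omega
end Factor

/-- **Concentration for sums of λ-wise independent bounded random variables**
(Lemma 3.10, from Bellare–Rompel): if `λ ≥ 4` is even and `X = Σ_{i=1}^n X_i` where
the `X_i` are λ-wise independent random variables taking values in `[0, M]`, then for
every `a > 0`, `Pr[|X − μ| > a] ≤ 8·((μλM + λ²M²)/a²)^{λ/2}`, where `μ = E[X]`. -/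
theorem stmt8 {Ω : Type*} [MeasurableSpace Ω] (μ : Measure Ω) [IsProbabilityMeasure μ]
    (n lam : ℕ) (hlam4 : 4 ≤ lam) (hlamEven : Even lam)
    (M : ℝ) (X : Fin n → Ω → ℝ) (hXmeas : ∀ i, Measurable (X i))
    (hXbdd : ∀ i, ∀ ω, X i ω ∈ Set.Icc (0:ℝ) M)
    (hindep : ∀ S : Finset (Fin n), S.card ≤ lam →
        iIndepFun (fun i : S => X i.1) μ)
    (a : ℝ) (ha : 0 < a) :
    μ {ω | a < |(∑ i, X i ω) - ∫ ω', (∑ i, X i ω') ∂μ|} ≤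
      ENNReal.ofReal (8 * (((∫ ω', (∑ i, X i ω') ∂μ) * lam * M + (lam:ℝ) ^ 2 * M ^ 2)
        / a ^ 2) ^ (lam / 2)) := by
  rcases Nat.eq_zero_or_pos n with hn | hn
  · subst hn
    have hset : {ω : Ω | a < |(∑ i, X i ω) - ∫ ω', (∑ i, X i ω') ∂μ|} = ∅ := by
      ext ω
      simp only [Set.mem_setOf_eq, Set.mem_empty_iff_false, iff_false, not_lt]
      simp only [Finset.univ_eq_empty, Finset.sum_empty, integral_zero, sub_zero, abs_zero]
      exact ha.le
    rw [hset]
    simp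
  have hΩ : Nonempty Ω := nonempty_of_prob μ
  obtain ⟨h, hlamh⟩ : ∃ h, lam = 2*h := by
    obtain ⟨r, hr⟩ := hlamEven; exact ⟨r, by omega⟩
  have hh2 : 2 ≤ h := by omega
  set m : Fin n → ℝ := fun i => ∫ ω, X i ω ∂μ with hm_def
  have hm_mem : ∀ i, m i ∈ Set.Icc (0:ℝ) M := fun i => integral_X_mem μ (hXmeas i) (hXbdd i)
  have hM0 : 0 ≤ M := ((hXbdd ⟨0, hn⟩ (Classical.arbitrary Ω)).1).trans
    ((hXbdd ⟨0, hn⟩ (Classical.arbitrary Ω)).2)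
  have hXint : ∀ i, Integrable (X i) μ := fun i => integrable_of_bdd (hXmeas i)
    (C := M) (fun ω => abs_le.mpr ⟨by linarith [(hXbdd i ω).1], (hXbdd i ω).2⟩)
  have hES : ∫ ω', (∑ i, X i ω') ∂μ = ∑ i, m i :=
    integral_finset_sum univ (fun i _ => hXint i)
  set ES : ℝ := ∑ i, m i with hES_def
  have hES0 : 0 ≤ ES := Finset.sum_nonneg fun i _ => (hm_mem i).1
  set Z : Ω → ℝ := fun ω => (∑ i, X i ω) - ES with hZ_def
  have hYabs : ∀ i ω, |X i ω - m i| ≤ M := by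
    intro i ω
    rw [abs_le]
    exact ⟨by linarith [(hXbdd i ω).1, (hm_mem i).2], by linarith [(hXbdd i ω).2, (hm_mem i).1]⟩
  -- pointwise expansion
  have hZpow : ∀ ω, (Z ω)^lam = ∑ f : Fin lam → Fin n, ∏ t, (X (f t) ω - m (f t)) := by
    intro ω
    have h1 : Z ω = ∑ i, (X i ω - m i) := by
      rw [hZ_def]; rw [Finset.sum_sub_distrib]
    rw [h1, Fintype.sum_pow]
  -- integrability of products
  have hprod_meas : ∀ f : Fin lam → Fin n, Measurable (fun ω => ∏ t, (X (f t) ω - m (f t))) :=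
    fun f => Finset.measurable_prod _ fun t _ => (hXmeas (f t)).sub measurable_const
  have hprod_int : ∀ f : Fin lam → Fin n,
      Integrable (fun ω => ∏ t, (X (f t) ω - m (f t))) μ := by
    intro f
    refine integrable_of_bdd (hprod_meas f) (C := M^lam) (fun ω => ?_)
    rw [abs_prod]
    calc ∏ t, |X (f t) ω - m (f t)| ≤ ∏ _t : Fin lam, M :=
          Finset.prod_le_prod (fun t _ => abs_nonneg _) (fun t _ => hYabs (f t) ω)
      _ = M^lam := by rw [Finset.prod_const, Finset.card_univ, Fintype.card_fin]
  -- step: expectation of each product factorizes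
  have hfact : ∀ f : Fin lam → Fin n,
      ∫ ω, ∏ t, (X (f t) ω - m (f t)) ∂μ =
        ∏ i ∈ image f univ, ∫ ω, (X i ω - m i)^(#(univ.filter (fun t => f t = i))) ∂μ := by
    intro f
    have hpt : ∀ ω, ∏ t, (X (f t) ω - m (f t)) =
        ∏ i ∈ image f univ, (X i ω - m i)^(#(univ.filter (fun t => f t = i))) := by
      intro ω
      exact Finset.prod_comp (fun i => X i ω - m i) f
    rw [integral_congr_ae (Filter.Eventually.of_forall hpt)]
    have hTcard : (image f univ).card ≤ lam := by
      calc (image f univ).card ≤ (univ : Finset (Fin lam)).card := Finset.card_image_le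
        _ = lam := by rw [Finset.card_univ, Fintype.card_fin]
    have hii := hindep (image f univ) hTcard
    have hii2 : iIndepFun
        (fun j : (image f univ : Finset (Fin n)) =>
          (fun ω => (X j.1 ω - m j.1)^(#(univ.filter (fun t => f t = j.1))))) μ := by
      have := hii.comp (fun j : (image f univ : Finset (Fin n)) =>
          (fun x : ℝ => (x - m j.1)^(#(univ.filter (fun t => f t = j.1)))))
        (fun j => (measurable_id.sub measurable_const).pow_const _)
      exact this
    have := integral_prod_of_indep (μ := μ) hii2
      (fun j => ((hXmeas j.1).sub measurable_const).pow_const _)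
      (C := fun j => M^(#(univ.filter (fun t => f t = j.1))))
      (fun j ω => by rw [abs_pow]; exact pow_le_pow_left₀ (abs_nonneg _) (hYabs j.1 ω) _)
      (univ : Finset (image f univ : Finset (Fin n)))
    calc ∫ ω, ∏ i ∈ image f univ, (X i ω - m i)^(#(univ.filter (fun t => f t = i))) ∂μ
        = ∫ ω, ∏ j : (image f univ : Finset (Fin n)),
            (X j.1 ω - m j.1)^(#(univ.filter (fun t => f t = j.1))) ∂μ := by
          refine integral_congr_ae (Filter.Eventually.of_forall fun ω => ?_)
          exact (Finset.prod_coe_sort (image f univ)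
            (fun i => (X i ω - m i)^(#(univ.filter (fun t => f t = i))))).symm
      _ = ∏ j : (image f univ : Finset (Fin n)),
            ∫ ω, (X j.1 ω - m j.1)^(#(univ.filter (fun t => f t = j.1))) ∂μ := this
      _ = ∏ i ∈ image f univ, ∫ ω, (X i ω - m i)^(#(univ.filter (fun t => f t = i))) ∂μ :=
          Finset.prod_coe_sort (image f univ)
            (fun i => ∫ ω, (X i ω - m i)^(#(univ.filter (fun t => f t = i))) ∂μ)
  -- fiber size facts
  have hc_sum : ∀ f : Fin lam → Fin n, ∑ i ∈ image f univ, #(univ.filter (fun t => f t = i)) = lam := by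
    intro f
    have h0 := Finset.card_eq_sum_card_fiberwise
      (fun (x : Fin lam) (_ : x ∈ univ) => mem_image_of_mem f (mem_univ x))
    rw [Finset.card_univ, Fintype.card_fin] at h0
    exact h0.symm
  have hc_pos : ∀ f : Fin lam → Fin n, ∀ i ∈ image f univ,
      1 ≤ #(univ.filter (fun t => f t = i)) := by
    intro f i hi
    obtain ⟨t, _, rfl⟩ := Finset.mem_image.mp hi
    exact Nat.one_le_iff_ne_zero.mpr
      (Finset.card_ne_zero_of_mem (mem_filter.mpr ⟨mem_univ t, rfl⟩))
  have hm0 : ∀ i, 0 ≤ m i := fun i => (hm_mem i).1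
  -- the moment bound
  have hkey : ∫ ω, (Z ω)^lam ∂μ ≤ (ES * lam * M + (lam:ℝ)^2 * M^2)^h := by
    calc ∫ ω, (Z ω)^lam ∂μ
        = ∑ f : Fin lam → Fin n, ∫ ω, ∏ t, (X (f t) ω - m (f t)) ∂μ := by
          rw [integral_congr_ae (Filter.Eventually.of_forall hZpow)]
          exact integral_finset_sum univ (fun f _ => hprod_int f)
      _ = ∑ f : Fin lam → Fin n,
            ∏ i ∈ image f univ, ∫ ω, (X i ω - m i)^(#(univ.filter (fun t => f t = i))) ∂μ :=
          Finset.sum_congr rfl fun f _ => hfact f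
      _ ≤ ∑ f ∈ univ.filter (fun f : Fin lam → Fin n =>
              ∀ i ∈ image f univ, 2 ≤ #(univ.filter (fun t => f t = i))),
            M^(lam - #(image f univ)) * ∏ i ∈ image f univ, m i := by
          rw [← Finset.sum_filter_add_sum_filter_not univ
            (fun f : Fin lam → Fin n => ∀ i ∈ image f univ, 2 ≤ #(univ.filter (fun t => f t = i)))
            (fun f => ∏ i ∈ image f univ, ∫ ω, (X i ω - m i)^(#(univ.filter (fun t => f t = i))) ∂μ)]
          have hzero : ∑ f ∈ univ.filter (fun f : Fin lam → Fin n =>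
              ¬ (∀ i ∈ image f univ, 2 ≤ #(univ.filter (fun t => f t = i)))),
              (∏ i ∈ image f univ, ∫ ω, (X i ω - m i)^(#(univ.filter (fun t => f t = i))) ∂μ) = 0 := by
            refine Finset.sum_eq_zero fun f hf => ?_
            obtain ⟨i, hi, hlt⟩ := by
              have := (mem_filter.mp hf).2
              push_neg at this
              exact this
            have hc1 : #(univ.filter (fun t => f t = i)) = 1 := by
              have := hc_pos f i hi; omega
            refine Finset.prod_eq_zero hi ?_
            rw [hc1]
            simp only [pow_one]
            rw [integral_sub (hXint i) (integrable_const _), integral_const]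
            simp
            exact sub_self _
          rw [hzero, add_zero]
          refine Finset.sum_le_sum fun f hf => ?_
          have hP := (mem_filter.mp hf).2
          calc ∏ i ∈ image f univ, ∫ ω, (X i ω - m i)^(#(univ.filter (fun t => f t = i))) ∂μ
              ≤ |∏ i ∈ image f univ, ∫ ω, (X i ω - m i)^(#(univ.filter (fun t => f t = i))) ∂μ| :=
                le_abs_self _
            _ = ∏ i ∈ image f univ, |∫ ω, (X i ω - m i)^(#(univ.filter (fun t => f t = i))) ∂μ| :=
                Finset.abs_prod _ _
            _ ≤ ∏ i ∈ image f univ, M^((#(univ.filter (fun t => f t = i))) - 1) * m i := by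
                refine Finset.prod_le_prod (fun i _ => abs_nonneg _) (fun i hi => ?_)
                exact factor_bound μ (hXmeas i) (hXbdd i) (hP i hi)
            _ = (∏ i ∈ image f univ, M^((#(univ.filter (fun t => f t = i))) - 1)) *
                  ∏ i ∈ image f univ, m i := Finset.prod_mul_distrib
            _ = M^(lam - #(image f univ)) * ∏ i ∈ image f univ, m i := by
                congr 1
                rw [Finset.prod_pow_eq_pow_sum]
                congr 1
                have h1 : ∑ i ∈ image f univ, ((#(univ.filter (fun t => f t = i)) - 1) + 1) = lam := by
                  refine Eq.trans (Finset.sum_congr rfl fun i hi => ?_) (hc_sum f)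
                  have := hc_pos f i hi; omega
                rw [Finset.sum_add_distrib, Finset.sum_const, smul_eq_mul, mul_one] at h1
                omega
      _ = ∑ k ∈ Finset.range (h+1),
            ∑ f ∈ (univ.filter (fun f : Fin lam → Fin n =>
              ∀ i ∈ image f univ, 2 ≤ #(univ.filter (fun t => f t = i)))).filter
                (fun f => #(image f univ) = k),
            M^(lam - #(image f univ)) * ∏ i ∈ image f univ, m i := by
          refine (Finset.sum_fiberwise_of_maps_to (fun f hf => ?_) _).symm
          have hP := (mem_filter.mp hf).2
          have h2k : 2 * #(image f univ) ≤ lam := by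
            have h3 : ∑ i ∈ image f univ, 2 ≤ ∑ i ∈ image f univ, #(univ.filter (fun t => f t = i)) :=
              Finset.sum_le_sum hP
            rw [Finset.sum_const, smul_eq_mul, mul_comm] at h3
            rw [hc_sum f] at h3
            omega
          exact Finset.mem_range.mpr (by omega)
      _ ≤ ∑ k ∈ Finset.range (h+1),
            (h.choose k : ℝ) * (ES * lam * M)^k * ((lam:ℝ)^2 * M^2)^(h-k) := by
          refine Finset.sum_le_sum fun k hk => ?_
          have hkh : k ≤ h := by have := Finset.mem_range.mp hk; omega
          rw [Finset.filter_filter]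
          have hsum_eq : ∑ f ∈ univ.filter (fun f : Fin lam → Fin n =>
                (∀ i ∈ image f univ, 2 ≤ #(univ.filter (fun t => f t = i))) ∧ #(image f univ) = k),
              M^(lam - #(image f univ)) * ∏ i ∈ image f univ, m i
              = M^(lam - k) * ∑ f ∈ univ.filter (fun f : Fin lam → Fin n =>
                (∀ i ∈ image f univ, 2 ≤ #(univ.filter (fun t => f t = i))) ∧ #(image f univ) = k),
                ∏ i ∈ image f univ, m i := by
            rw [Finset.mul_sum]
            refine Finset.sum_congr rfl fun f hf => ?_
            rw [(Finset.mem_filter.mp hf).2.2]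
          rw [hsum_eq]
          rcases Nat.eq_zero_or_pos k with hk0 | hk1
          · subst hk0
            have hempty : univ.filter (fun f : Fin lam → Fin n =>
                (∀ i ∈ image f univ, 2 ≤ #(univ.filter (fun t => f t = i))) ∧ #(image f univ) = 0) = ∅ := by
              refine Finset.eq_empty_of_forall_notMem fun f hf => ?_
              have h0 := (Finset.mem_filter.mp hf).2.2
              rw [Finset.card_eq_zero] at h0
              have : f ⟨0, by omega⟩ ∈ image f univ := mem_image_of_mem f (mem_univ _)
              rw [h0] at this
              exact absurd this (Finset.notMem_empty _)
            rw [hempty]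
            simp only [Finset.sum_empty, mul_zero]
            positivity
          · have hmc := main_count lam k n m hm0
            have hes := esymm_bound n k m hm0
            have hcb := count_bound h k hk1 hkh
            rw [← hlamh] at hcb
            have hek0 : 0 ≤ ∑ S ∈ powersetCard k (univ : Finset (Fin n)), ∏ i ∈ S, m i :=
              Finset.sum_nonneg fun S _ => Finset.prod_nonneg fun i _ => hm0 i
            have hcast : ((lam.descFactorial (2*k) * k^(lam-2*k) : ℕ) : ℝ) =
                (lam.descFactorial (2*k) : ℝ) * (k:ℝ)^(lam-2*k) := by push_cast; ring
            calc M^(lam - k) * ∑ f ∈ univ.filter (fun f : Fin lam → Fin n =>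
                  (∀ i ∈ image f univ, 2 ≤ #(univ.filter (fun t => f t = i))) ∧ #(image f univ) = k),
                  ∏ i ∈ image f univ, m i
                ≤ M^(lam - k) * (((lam.descFactorial (2*k) * k^(lam-2*k) : ℕ) : ℝ) *
                    ∑ S ∈ powersetCard k (univ : Finset (Fin n)), ∏ i ∈ S, m i) :=
                  mul_le_mul_of_nonneg_left hmc (by positivity)
              _ ≤ M^(lam - k) * ((((k.factorial * h.choose k : ℕ)) : ℝ) * ((lam:ℕ):ℝ)^(lam-k) *
                    ∑ S ∈ powersetCard k (univ : Finset (Fin n)), ∏ i ∈ S, m i) := by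
                  refine mul_le_mul_of_nonneg_left ?_ (by positivity)
                  rw [hcast]
                  exact mul_le_mul_of_nonneg_right hcb hek0
              _ = (h.choose k : ℝ) * ((lam:ℕ):ℝ)^(lam-k) * M^(lam-k) *
                    ((k.factorial : ℝ) * ∑ S ∈ powersetCard k (univ : Finset (Fin n)), ∏ i ∈ S, m i) := by
                  push_cast
                  ring
              _ ≤ (h.choose k : ℝ) * ((lam:ℕ):ℝ)^(lam-k) * M^(lam-k) * ES^k := by
                  refine mul_le_mul_of_nonneg_left hes (by positivity)
              _ = (h.choose k : ℝ) * (ES * lam * M)^k * ((lam:ℝ)^2 * M^2)^(h-k) := by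
                  rw [show lam - k = k + 2*(h-k) by omega, pow_add, pow_add, pow_mul, pow_mul]
                  ring
      _ = (ES * lam * M + (lam:ℝ)^2 * M^2)^h := by
          rw [add_pow]
          refine Finset.sum_congr rfl fun k hk => ?_
          ring
  -- Markov inequality and conclusion
  have hZmeas : Measurable Z := (Finset.measurable_sum univ fun i _ => hXmeas i).sub measurable_const
  have hZabs : ∀ ω, |Z ω| ≤ n*M + ES := by
    intro ω
    have h1 : |∑ i, X i ω| ≤ n*M := by
      calc |∑ i, X i ω| ≤ ∑ i, |X i ω| := Finset.abs_sum_le_sum_abs _ _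
        _ ≤ ∑ _i : Fin n, M := Finset.sum_le_sum fun i _ =>
            abs_le.mpr ⟨by linarith [(hXbdd i ω).1], (hXbdd i ω).2⟩
        _ = n*M := by rw [Finset.sum_const, Finset.card_univ, Fintype.card_fin, nsmul_eq_mul]
    have h2 := abs_le.mp h1
    rw [hZ_def, abs_le]
    constructor
    · simp only
      linarith
    · simp only
      linarith
  have hZlam_int : Integrable (fun ω => Z ω^lam) μ :=
    integrable_of_bdd (hZmeas.pow_const lam) (C := (n*M+ES)^lam) (fun ω => by
      rw [abs_pow]
      exact pow_le_pow_left₀ (abs_nonneg _) (hZabs ω) lam)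
  have hnonneg : ∀ ω, 0 ≤ Z ω^lam := fun ω => hlamEven.pow_nonneg (Z ω)
  have halam : 0 < a^lam := pow_pos ha lam
  have hsub : {ω | a < |Z ω|} ⊆ {ω | a^lam ≤ Z ω ^ lam} := by
    intro ω hω
    rw [Set.mem_setOf_eq] at hω ⊢
    rw [← hlamEven.pow_abs (Z ω)]
    exact pow_le_pow_left₀ ha.le hω.le lam
  have hmarkov := mul_meas_ge_le_integral_of_nonneg (μ := μ)
    (Filter.Eventually.of_forall hnonneg) hZlam_int (a^lam)
  have hgoal_set : {ω : Ω | a < |(∑ i, X i ω) - ∫ ω', (∑ i, X i ω') ∂μ|} = {ω | a < |Z ω|} := by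
    ext ω
    rw [Set.mem_setOf_eq, Set.mem_setOf_eq, hES]
  rw [hgoal_set, hES]
  set B := ES * (lam:ℝ) * M + (lam:ℝ)^2 * M^2 with hB_def
  have hB0 : 0 ≤ B := by positivity
  have hne : μ {ω | a^lam ≤ Z ω^lam} ≠ ⊤ := measure_ne_top μ _
  have htoReal : (μ {ω | a^lam ≤ Z ω^lam}).toReal ≤ B^h / a^lam := by
    rw [le_div_iff₀ halam]
    calc (μ {ω | a^lam ≤ Z ω^lam}).toReal * a^lam
        = a^lam * (μ {ω | a^lam ≤ Z ω^lam}).toReal := mul_comm _ _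
      _ ≤ ∫ ω, Z ω^lam ∂μ := hmarkov
      _ ≤ B^h := hkey
  have hfinal : B^h / a^lam ≤ 8 * (B/a^2)^(lam/2) := by
    have hdiv : B^h / a^lam = (B/a^2)^h := by
      rw [div_pow, hlamh, pow_mul]
    rw [hdiv, show lam/2 = h by omega]
    have hx : 0 ≤ (B/a^2)^h := by positivity
    linarith
  calc μ {ω | a < |Z ω|} ≤ μ {ω | a^lam ≤ Z ω^lam} := measure_mono hsub
    _ = ENNReal.ofReal ((μ {ω | a^lam ≤ Z ω^lam}).toReal) := (ENNReal.ofReal_toReal hne).symm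
    _ ≤ ENNReal.ofReal (8 * (B/a^2)^(lam/2)) :=
        ENNReal.ofReal_le_ofReal (htoReal.trans hfinal)
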